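/- With Ξ(φ) = −arccos( (1/√2)(4 − 3√2 cos φ)/(3 − 2√2 cos φ) ), one has Ξ(π/4) = −π/4, and for all φ ∈ (0, π/2): Ξ(φ) + Ξ(π/2 − φ) ≤ −π/2, with equality only at φ = π/4. -/

import Mathlib

open Real Set

noncomputable section
set_option maxHeartbeats 1000000

/-- `Ξ(φ) = −arccos((1/√2)(4 − 3√2 cos φ)/(3 − 2√2 cos φ))`. -/
def Xi (φ : ℝ) : ℝ :=
  - Real.arccos ((1 / Real.sqrt 2) *
    (4 - 3 * Real.sqrt 2 * Real.cos φ) / (3 - 2 * Real.sqrt 2 * Real.cos φ))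

lemma arccos_anti {x y : ℝ} (h : x ≤ y) : Real.arccos y ≤ Real.arccos x := by
  unfold Real.arccos
  have := Real.monotone_arcsin h
  linarith

lemma sqrt2_sq : (Real.sqrt 2) ^ 2 = 2 := Real.sq_sqrt (by norm_num)
lemma sqrt2_pos : 0 < Real.sqrt 2 := Real.sqrt_pos.mpr (by norm_num)
lemma sqrt2_lt : Real.sqrt 2 < 3/2 := by
  nlinarith [sqrt2_sq, sqrt2_pos]
lemma sqrt2_gt : 4/3 < Real.sqrt 2 := by
  nlinarith [sqrt2_sq, sqrt2_pos]


lemma aux_Q (c t : ℝ) (hc0 : 0 < c) (ht0 : 0 < t) (ht2 : t ^ 2 = 2) (hc43 : 0 ≤ 4 - 3 * t * c) :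
    2/9 ≤ 2 + 2 * t * c - 5 * c ^ 2 := by
  nlinarith [mul_nonneg hc0.le hc43, sq_nonneg (t * c)]

lemma aux_huv (c s t : ℝ) (hc0 : 0 < c) (hc1 : c < 1) (hs0 : 0 < s)
    (hcs : s ^ 2 + c ^ 2 = 1) (ht2 : t ^ 2 = 2) (ht0 : 0 < t) (htg : 4/3 < t)
    (hc43 : 0 ≤ 4 - 3 * t * c) :
    4 - c ^ 2 - 2 * t * c ≤ 3 * (t - c) * s := by
  have hQ := aux_Q c t hc0 ht0 ht2 hc43
  have hu : 0 < 4 - c ^ 2 - 2 * t * c := by nlinarith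
  have hv : 0 < 3 * (t - c) * s := by
    have : 0 < t - c := by nlinarith
    positivity
  have hP : (3 * (t - c) * s) ^ 2 - (4 - c ^ 2 - 2 * t * c) ^ 2
      = (t * c - 1) ^ 2 * (2 + 2 * t * c - 5 * c ^ 2) := by
    linear_combination (9*(t-c)^2) * hcs + (-2*c^3*t + 5*c^4 - 11*c^2 + 9) * ht2
  have hsq : (4 - c ^ 2 - 2 * t * c) ^ 2 ≤ (3 * (t - c) * s) ^ 2 := by
    nlinarith [mul_nonneg (sq_nonneg (t*c - 1)) (by linarith : (0:ℝ) ≤ 2 + 2*t*c - 5*c^2)]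
  nlinarith [hsq, hu, hv]

lemma aux_eq (c s t : ℝ) (hc0 : 0 < c) (hcs : s ^ 2 + c ^ 2 = 1)
    (ht0 : 0 < t) (ht2 : t ^ 2 = 2) (hc43 : 0 ≤ 4 - 3 * t * c)
    (huveq : 4 - c ^ 2 - 2 * t * c = 3 * (t - c) * s) : c = t / 2 := by
  have hQ := aux_Q c t hc0 ht0 ht2 hc43
  have hP : (3 * (t - c) * s) ^ 2 - (4 - c ^ 2 - 2 * t * c) ^ 2
      = (t * c - 1) ^ 2 * (2 + 2 * t * c - 5 * c ^ 2) := by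
    linear_combination (9*(t-c)^2) * hcs + (-2*c^3*t + 5*c^4 - 11*c^2 + 9) * ht2
  have hsqeq : (t * c - 1) ^ 2 * (2 + 2 * t * c - 5 * c ^ 2) = 0 := by
    have h4 : (4 - c ^ 2 - 2 * t * c) ^ 2 = (3 * (t - c) * s) ^ 2 := by rw [huveq]
    linarith [hP]
  have htc : t * c = 1 := by
    nlinarith [hsqeq, sq_nonneg (t*c - 1),
      mul_nonneg (sq_nonneg (t*c - 1)) (by linarith : (0:ℝ) ≤ 2 + 2*t*c - 5*c^2 - 2/9)]
  linear_combination (t/2) * htc - (c/2) * ht2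

/-- the key analytic fact -/
lemma key (c s : ℝ) (hc0 : 0 < c) (hc1 : c < 1) (hs0 : 0 < s) (hs1 : s < 1)
    (hcs : s ^ 2 + c ^ 2 = 1) :
    π / 2 ≤ Real.arccos ((1 / Real.sqrt 2) * (4 - 3 * Real.sqrt 2 * c) / (3 - 2 * Real.sqrt 2 * c))
        + Real.arccos ((1 / Real.sqrt 2) * (4 - 3 * Real.sqrt 2 * s) / (3 - 2 * Real.sqrt 2 * s)) ∧
    (Real.arccos ((1 / Real.sqrt 2) * (4 - 3 * Real.sqrt 2 * c) / (3 - 2 * Real.sqrt 2 * c))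
        + Real.arccos ((1 / Real.sqrt 2) * (4 - 3 * Real.sqrt 2 * s) / (3 - 2 * Real.sqrt 2 * s))
        = π / 2 → c = Real.sqrt 2 / 2) := by
  set t := Real.sqrt 2 with ht
  have ht2 : t ^ 2 = 2 := sqrt2_sq
  have ht0 : 0 < t := sqrt2_pos
  have htl : t < 3/2 := sqrt2_lt
  have htg : 4/3 < t := sqrt2_gt
  have hdc : 0 < 3 - 2 * t * c := by nlinarith
  have hds : 0 < 3 - 2 * t * s := by nlinarith
  have hmc : 0 < t * (3 - 2 * t * c) := by positivity
  have hms : 0 < t * (3 - 2 * t * s) := by positivity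
  set x := (1 / t) * (4 - 3 * t * c) / (3 - 2 * t * c) with hx
  set y := (1 / t) * (4 - 3 * t * s) / (3 - 2 * t * s) with hy
  have htne : t ≠ 0 := ht0.ne'
  have hx' : x = (4 - 3 * t * c) / (t * (3 - 2 * t * c)) := by
    rw [hx]; field_simp
  have hy' : y = (4 - 3 * t * s) / (t * (3 - 2 * t * s)) := by
    rw [hy]; field_simp
  clear_value t x y
  -- bounds
  have hy_lb : -1 ≤ y := by
    rw [hy', le_div_iff₀ hms]
    nlinarith [ht2, mul_nonneg (by linarith : (0:ℝ) ≤ 4 + 3*t) (by linarith : (0:ℝ) ≤ 1 - s)]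
  have hy_ub : y < 1 := by
    rw [hy', div_lt_one hms]
    nlinarith [ht2, mul_pos (by linarith : (0:ℝ) < 3*t - 4) (by linarith : (0:ℝ) < 1 + s)]
  have hx_lb : -1 ≤ x := by
    rw [hx', le_div_iff₀ hmc]
    nlinarith [ht2, mul_nonneg (by linarith : (0:ℝ) ≤ 4 + 3*t) (by linarith : (0:ℝ) ≤ 1 - c)]
  have hx_ub : x < 1 := by
    rw [hx', div_lt_one hmc]
    nlinarith [ht2, mul_pos (by linarith : (0:ℝ) < 3*t - 4) (by linarith : (0:ℝ) < 1 + c)]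
  -- useful flattened identity
  have hflat : (4 - 3*t*s) * (3 - 2*t*c) - s * (t * (3 - 2*t*s))
      = 4 * ((4 - c^2 - 2*t*c) - 3*(t - c)*s) := by
    linear_combination (6*s*c + 2*s^2) * ht2 + 4 * hcs
  by_cases hgc : 0 ≤ x
  · -- main case
    have hc43 : 0 ≤ 4 - 3 * t * c := by
      by_contra h
      push_neg at h
      have hxneg : x < 0 := by
        rw [hx']
        exact div_neg_of_neg_of_pos (by linarith) hmc
      linarith
    have huv : 4 - c ^ 2 - 2 * t * c <= 3 * (t - c) * s :=
      aux_huv c s t hc0 hc1 hs0 hcs ht2 ht0 htg hc43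
    -- key inequality y ≤ s / (3 - 2 t c)
    have hkey : y ≤ s / (3 - 2 * t * c) := by
      rw [hy', div_le_div_iff₀ hms hdc]
      linarith [hflat, huv]
    -- sin (arccos x) = s / (3 - 2 t c)
    have hsinA : Real.sin (Real.arccos x) = s / (3 - 2 * t * c) := by
      rw [Real.sin_arccos]
      have h1 : 1 - x ^ 2 = (s / (3 - 2 * t * c)) ^ 2 := by
        rw [hx']
        rw [div_pow, div_pow, mul_pow, one_sub_div (by positivity),
          div_eq_div_iff (by positivity) (by positivity)]
        linear_combination (3-2*t*c)^2 * ((3-2*t*c)^2 - s^2 - c^2) * ht2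
          - 2*(3-2*t*c)^2 * hcs
      rw [h1, Real.sqrt_sq (by positivity)]
    have hA_le : Real.arccos x ≤ π / 2 := Real.arccos_le_pi_div_two.mpr hgc
    have hA_nonneg : 0 ≤ Real.arccos x := Real.arccos_nonneg x
    have hcosB : Real.cos (π / 2 - Real.arccos x) = s / (3 - 2 * t * c) := by
      rw [Real.cos_pi_div_two_sub, hsinA]
    have hB_ge : π / 2 - Real.arccos x ≤ Real.arccos y := by
      have h1 : Real.arccos (Real.cos (π / 2 - Real.arccos x)) = π / 2 - Real.arccos x :=
        Real.arccos_cos (by linarith) (by linarith [Real.pi_pos])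
      have h2 : Real.arccos (Real.cos (π / 2 - Real.arccos x)) ≤ Real.arccos y := by
        apply arccos_anti
        rw [hcosB]; exact hkey
      linarith
    refine ⟨by linarith, ?_⟩
    intro heq
    -- equality case
    have hBeq : Real.arccos y = π / 2 - Real.arccos x := by linarith
    have hyeq : y = s / (3 - 2 * t * c) := by
      have h3 := Real.cos_arccos hy_lb hy_ub.le
      rw [hBeq, hcosB] at h3
      linarith
    have hyeq2 : (4 - 3*t*s) * (3 - 2*t*c) = s * (t * (3 - 2*t*s)) := by
      rw [hy', div_eq_div_iff hms.ne' hdc.ne'] at hyeq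
      linarith [hyeq]
    have huveq : 4 - c ^ 2 - 2 * t * c = 3 * (t - c) * s := by
      have := hflat
      rw [hyeq2] at this
      linarith
    exact aux_eq c s t hc0 hcs ht0 ht2 hc43 huveq
  · -- x < 0 : strict
    push_neg at hgc
    have hA : π / 2 < Real.arccos x :=
      lt_of_not_ge (fun h => hgc.not_ge (Real.arccos_le_pi_div_two.mp h))
    have hB : 0 < Real.arccos y := Real.arccos_pos.mpr hy_ub
    exact ⟨by linarith, fun h => absurd h (by linarith)⟩

/-- `Ξ(π/4) = −π/4`, and for all `φ ∈ (0, π/2)`: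
`Ξ(φ) + Ξ(π/2 − φ) ≤ −π/2`, with equality only at `φ = π/4`. -/
theorem Xi_sum_bound :
    Xi (π / 4) = -(π / 4) ∧
    ∀ φ ∈ Ioo 0 (π / 2),
      Xi φ + Xi (π / 2 - φ) ≤ -(π / 2) ∧
      (Xi φ + Xi (π / 2 - φ) = -(π / 2) → φ = π / 4) := by
  have ht2 : (Real.sqrt 2) ^ 2 = 2 := sqrt2_sq
  have ht0 : 0 < Real.sqrt 2 := sqrt2_pos
  constructor
  · unfold Xi
    rw [Real.cos_pi_div_four]
    have harg : (1 / Real.sqrt 2) * (4 - 3 * Real.sqrt 2 * (Real.sqrt 2 / 2)) /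
        (3 - 2 * Real.sqrt 2 * (Real.sqrt 2 / 2)) = Real.sqrt 2 / 2 := by
      have h1 : 3 * Real.sqrt 2 * (Real.sqrt 2 / 2) = 3 := by
        linear_combination (3/2) * ht2
      have h2 : 2 * Real.sqrt 2 * (Real.sqrt 2 / 2) = 2 := by
        linear_combination ht2
      rw [h1, h2, show (4:ℝ) - 3 = 1 by norm_num, show (3:ℝ) - 2 = 1 by norm_num,
        mul_one, div_one, div_eq_div_iff ht0.ne' (by norm_num : (2:ℝ) ≠ 0)]
      linear_combination -ht2
    rw [harg, show (Real.sqrt 2 / 2 : ℝ) = Real.cos (π/4) from Real.cos_pi_div_four.symm,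
      Real.arccos_cos (by positivity) (by linarith [Real.pi_pos])]
  · intro φ hφ
    obtain ⟨hφ0, hφ2⟩ := hφ
    have hπ := Real.pi_pos
    have hc0 : 0 < Real.cos φ := Real.cos_pos_of_mem_Ioo ⟨by linarith, hφ2⟩
    have hc1 : Real.cos φ < 1 := by
      have := Real.cos_lt_cos_of_nonneg_of_le_pi (le_refl 0) (by linarith) hφ0
      rwa [Real.cos_zero] at this
    have hs0 : 0 < Real.sin φ := Real.sin_pos_of_pos_of_lt_pi hφ0 (by linarith)
    have hcs : Real.sin φ ^ 2 + Real.cos φ ^ 2 = 1 := Real.sin_sq_add_cos_sq φ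
    have hs1 : Real.sin φ < 1 := by nlinarith
    have hkey := key (Real.cos φ) (Real.sin φ) hc0 hc1 hs0 hs1 hcs
    have hXi2 : Xi (π / 2 - φ) = - Real.arccos ((1 / Real.sqrt 2) *
        (4 - 3 * Real.sqrt 2 * Real.sin φ) / (3 - 2 * Real.sqrt 2 * Real.sin φ)) := by
      unfold Xi
      rw [Real.cos_pi_div_two_sub]
    have hXi1 : Xi φ = - Real.arccos ((1 / Real.sqrt 2) *
        (4 - 3 * Real.sqrt 2 * Real.cos φ) / (3 - 2 * Real.sqrt 2 * Real.cos φ)) := rfl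
    constructor
    · rw [hXi1, hXi2]; linarith [hkey.1]
    · intro heq
      rw [hXi1, hXi2] at heq
      have hcφ : Real.cos φ = Real.sqrt 2 / 2 := hkey.2 (by linarith)
      have hccos : Real.cos φ = Real.cos (π / 4) := by rw [hcφ, Real.cos_pi_div_four]
      exact Real.injOn_cos ⟨hφ0.le, by linarith⟩ ⟨by positivity, by linarith⟩ hccos
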